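/- arXiv:2507.23500 — 6 statements merged into one kernel-verified Lean document; each statement's English description precedes it below -/
import Mathlib

section
/- Let n ≥ 3 and let α₁ ≤ α₂ ≤ ... ≤ αₙ be nonnegative reals such that αₙ ≤ αₜ + α_{n−t} for all t ∈ {1,...,n−1}. Then ∑_{t=⌈n/e⌉}^{n} αₜ/(t−1) ≥ αₙ/2. -/
open Finset

private lemma log_ratio_le' (x : ℝ) (hx : 1 ≤ x) : Real.log (x+1) - Real.log x ≤ 1/x := by
  have hx0 : 0 < x := by linarith
  have h := Real.log_le_sub_one_of_pos (show 0 < (x+1)/x by positivity)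
  rw [Real.log_div (by linarith) (ne_of_gt hx0)] at h
  have : (x+1)/x - 1 = 1/x := by field_simp; ring
  linarith [this ▸ h]

private lemma log_ratio_ge' (x : ℝ) (hx : 1 ≤ x) : 1/(x+1) ≤ Real.log (x+1) - Real.log x := by
  have hx0 : 0 < x := by linarith
  have h := Real.log_le_sub_one_of_pos (show 0 < x/(x+1) by positivity)
  rw [Real.log_div (ne_of_gt hx0) (by linarith)] at h
  have : x/(x+1) - 1 = -(1/(x+1)) := by field_simp; ring
  linarith [this ▸ h]

private lemma harm_lb (a : ℕ) (ha : 2 ≤ a) : ∀ b : ℕ,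
    Real.log ((b:ℝ)-1) - Real.log ((a:ℝ)-1) ≤ ∑ u ∈ Ico a b, 1/((u:ℝ)-1) := by
  have ha1 : (1:ℝ) ≤ (a:ℝ) - 1 := by
    have : (2:ℝ) ≤ a := by exact_mod_cast ha
    linarith
  have hla : 0 ≤ Real.log ((a:ℝ)-1) := Real.log_nonneg ha1
  intro b
  induction b with
  | zero =>
    rw [show Ico a 0 = ∅ by simp, sum_empty]
    simp only [Nat.cast_zero]
    have : Real.log ((0:ℝ)-1) = 0 := by
      rw [show (0:ℝ)-1 = -1 by ring, Real.log_neg_eq_log, Real.log_one]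
    rw [this]; linarith
  | succ b ih =>
    by_cases hab : a ≤ b
    · rw [sum_Ico_succ_top hab]
      have hb1 : (1:ℝ) ≤ (b:ℝ) - 1 := by
        have : (2:ℝ) ≤ b := by exact_mod_cast le_trans ha hab
        linarith
      have h2 := log_ratio_le' ((b:ℝ)-1) hb1
      rw [show (b:ℝ) - 1 + 1 = b by ring] at h2
      push_cast
      rw [show (b:ℝ) + 1 - 1 = b by ring]
      linarith
    · push_neg at hab
      rw [show Ico a (b+1) = ∅ by rw [Ico_eq_empty_iff]; omega, sum_empty]
      push_cast
      rw [show (b:ℝ) + 1 - 1 = b by ring]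
      rcases Nat.eq_zero_or_pos b with hb0 | hb0
      · subst hb0; norm_num; linarith
      · have : Real.log (b:ℝ) ≤ Real.log ((a:ℝ)-1) := by
          apply Real.log_le_log (by exact_mod_cast hb0)
          have : (b:ℝ) + 1 ≤ a := by exact_mod_cast hab
          linarith
        linarith

private lemma harm_ub (a : ℕ) (ha : 3 ≤ a) : ∀ b : ℕ, a ≤ b →
    ∑ u ∈ Ico a b, 1/((u:ℝ)-1) ≤ Real.log ((b:ℝ)-2) - Real.log ((a:ℝ)-2) := by
  intro b hb
  induction b, hb using Nat.le_induction with
  | base => simp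
  | succ b hab ih =>
    rw [sum_Ico_succ_top hab]
    have hb3 : (3:ℝ) ≤ b := by exact_mod_cast le_trans ha hab
    have h2 := log_ratio_ge' ((b:ℝ)-2) (by linarith)
    rw [show (b:ℝ) - 2 + 1 = (b:ℝ) - 1 by ring] at h2
    push_cast
    rw [show (b:ℝ) + 1 - 2 = (b:ℝ) - 1 by ring]
    linarith

private lemma transport' (m : ℕ) (α c d : ℕ → ℝ)
    (hα1 : 0 ≤ α 1)
    (hmono : ∀ r, 2 ≤ r → r < m → α (r-1) ≤ α r)
    (htail : ∀ r, 1 ≤ r → r < m → ∑ s ∈ Ico r m, d s ≤ ∑ s ∈ Ico r m, c s) :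
    ∑ s ∈ Ico 1 m, d s * α s ≤ ∑ s ∈ Ico 1 m, c s * α s := by
  set β : ℕ → ℝ := fun i => if i = 1 then α 1 else α i - α (i-1) with hβdef
  have hβ0 : ∀ i, 1 ≤ i → i < m → 0 ≤ β i := by
    intro i h1 h2
    by_cases hi : i = 1
    · simp [hβdef, hi, hα1]
    · have h2' : 2 ≤ i := by omega
      simp only [hβdef, hi, if_false]
      have := hmono i h2' h2
      linarith
  have hα : ∀ j, 1 ≤ j → α j = ∑ i ∈ Ico 1 (j+1), β i := by
    intro j hj
    induction j, hj using Nat.le_induction with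
    | base => simp [hβdef]
    | succ j hj ih =>
      rw [sum_Ico_succ_top (by omega), ← ih]
      have : j + 1 ≠ 1 := by omega
      simp only [hβdef, this, if_false]
      simp
  have key : ∀ e : ℕ → ℝ, ∑ s ∈ Ico 1 m, e s * α s
      = ∑ i ∈ Ico 1 m, β i * ∑ s ∈ Ico i m, e s := by
    intro e
    have step1 : ∑ s ∈ Ico 1 m, e s * α s
        = ∑ s ∈ Ico 1 m, ∑ i ∈ Ico 1 (s+1), e s * β i := by
      apply sum_congr rfl
      intro s hs
      rw [mem_Ico] at hs
      rw [hα s hs.1, mul_sum]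
    rw [step1, ← Finset.sum_Ico_Ico_comm 1 m (fun i s => e s * β i)]
    apply sum_congr rfl
    intro i _
    rw [mul_sum]
    exact sum_congr rfl (fun s _ => by ring)
  rw [key d, key c]
  apply sum_le_sum
  intro i hi
  rw [mem_Ico] at hi
  exact mul_le_mul_of_nonneg_left (htail i hi.1 hi.2) (hβ0 i hi.1 hi.2)

private lemma reflect' (n r : ℕ) (f : ℕ → ℝ) (hrn : r ≤ n) :
    ∑ s ∈ Ico r n, f (n - s) = ∑ u ∈ Ico 1 (n - r + 1), f u := by
  apply Finset.sum_nbij' (fun s => n - s) (fun u => n - u)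
  · intro s hs; rw [mem_Ico] at hs ⊢; omega
  · intro u hu; rw [mem_Ico] at hu ⊢; omega
  · intro s hs; rw [mem_Ico] at hs; omega
  · intro u hu; rw [mem_Ico] at hu; omega
  · intro s hs; rfl

set_option maxHeartbeats 2000000 in
private lemma hard_lemma (n k : ℕ) (hn : 3 ≤ n) (h5 : n ≠ 5)
    (hkl : (n:ℝ)/Real.exp 1 ≤ (k:ℝ)) (hkh : (k:ℝ) < (n:ℝ)/Real.exp 1 + 1) :
    ∀ r : ℕ, k < r → k < n - r + 1 → r < n →
    ∑ u ∈ Ico k (n-r+1), 1/((u:ℝ)-1) ≤ ∑ s ∈ Ico r n, 1/((s:ℝ)-1) := by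
  have hE1 : Real.exp 1 < 2.7182818286 := Real.exp_one_lt_d9
  have hE2 : (2.7182818283 : ℝ) < Real.exp 1 := Real.exp_one_gt_d9
  have hEpos : (0:ℝ) < Real.exp 1 := Real.exp_pos 1
  have hkl' : (n:ℝ) ≤ Real.exp 1 * k := by
    rw [div_le_iff₀ hEpos] at hkl; linarith [hkl]
  have hkh' : Real.exp 1 * (k:ℝ) < (n:ℝ) + Real.exp 1 := by
    have := (mul_lt_mul_iff_right₀ hEpos).mpr hkh
    rw [mul_add, mul_one, mul_div_cancel₀ _ (ne_of_gt hEpos)] at this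
    linarith
  have hk0 : (0:ℝ) ≤ (k:ℝ) := Nat.cast_nonneg k
  intro r hr1 hr2 hrn
  by_cases h12 : 12 ≤ n
  · have hnR : (12:ℝ) ≤ (n:ℝ) := by exact_mod_cast h12
    have hk5 : 5 ≤ k := by
      have : (4:ℝ) < (k:ℝ) := by nlinarith
      exact_mod_cast this
    have hkr : k + 1 ≤ r := hr1
    have hkrn : k + r ≤ n := by omega
    have hkrnR : (k:ℝ) + (r:ℝ) ≤ (n:ℝ) := by exact_mod_cast hkrn
    have hkrR : (k:ℝ) + 1 ≤ (r:ℝ) := by exact_mod_cast hkr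
    have hk5R : (5:ℝ) ≤ (k:ℝ) := by exact_mod_cast hk5
    have hcast : ((n - r + 1 : ℕ) : ℝ) = (n:ℝ) - (r:ℝ) + 1 := by
      have : r ≤ n := by omega
      push_cast [this]; ring
    have hL2 := harm_ub k (by omega) (n - r + 1) (by omega)
    rw [hcast] at hL2
    have hL1 := harm_lb r (by omega) n
    have hmid : Real.log ((n:ℝ) - r + 1 - 2) - Real.log ((k:ℝ) - 2)
        ≤ Real.log ((n:ℝ) - 1) - Real.log ((r:ℝ) - 1) := by
      have p1 : (0:ℝ) < (n:ℝ) - r + 1 - 2 := by linarith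
      have p2 : (0:ℝ) < (r:ℝ) - 1 := by linarith
      have p3 : (0:ℝ) < (k:ℝ) - 2 := by linarith
      have p4 : (0:ℝ) < (n:ℝ) - 1 := by linarith
      have hquad : ((n:ℝ) - r + 1 - 2) * ((r:ℝ) - 1) ≤ ((k:ℝ) - 2) * ((n:ℝ) - 1) := by
        have h4 : 4 * (n:ℝ) ≤ 11 * (k:ℝ) := by nlinarith
        nlinarith [sq_nonneg ((n:ℝ) - 2*(r:ℝ)), mul_nonneg (sub_nonneg.2 hnR) (by linarith : (0:ℝ) ≤ (n:ℝ))]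
      have := Real.log_le_log (by positivity) hquad
      rw [Real.log_mul (ne_of_gt p1) (ne_of_gt p2), Real.log_mul (ne_of_gt p3) (ne_of_gt p4)] at this
      linarith
    linarith
  · have h11 : n ≤ 11 := by omega
    interval_cases n
    · -- n = 3
      norm_num at hkl' hkh'
      have hx1 : Real.exp 1 * (k:ℝ) ≤ 2.7182818286 * k := mul_le_mul_of_nonneg_right (le_of_lt hE1) hk0
      have hx2 : (2.7182818283:ℝ) * k ≤ Real.exp 1 * k := mul_le_mul_of_nonneg_right (le_of_lt hE2) hk0
      have hk : k = 2 := by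
        have h1 : (1:ℝ) < (k:ℝ) := by linarith
        have h2 : (k:ℝ) < 3 := by linarith
        have h1' : 1 < k := by exact_mod_cast h1
        have h2' : k < 3 := by exact_mod_cast h2
        omega
      subst hk
      interval_cases r <;> first | omega | norm_num [Finset.sum_Ico_eq_sum_range, Finset.sum_range_succ]
    · -- n = 4
      norm_num at hkl' hkh'
      have hx1 : Real.exp 1 * (k:ℝ) ≤ 2.7182818286 * k := mul_le_mul_of_nonneg_right (le_of_lt hE1) hk0
      have hx2 : (2.7182818283:ℝ) * k ≤ Real.exp 1 * k := mul_le_mul_of_nonneg_right (le_of_lt hE2) hk0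
      have hk : k = 2 := by
        have h1 : (1:ℝ) < (k:ℝ) := by linarith
        have h2 : (k:ℝ) < 3 := by linarith
        have h1' : 1 < k := by exact_mod_cast h1
        have h2' : k < 3 := by exact_mod_cast h2
        omega
      subst hk
      interval_cases r <;> first | omega | norm_num [Finset.sum_Ico_eq_sum_range, Finset.sum_range_succ]
    · omega
    · -- n = 6
      norm_num at hkl' hkh'
      have hx1 : Real.exp 1 * (k:ℝ) ≤ 2.7182818286 * k := mul_le_mul_of_nonneg_right (le_of_lt hE1) hk0
      have hx2 : (2.7182818283:ℝ) * k ≤ Real.exp 1 * k := mul_le_mul_of_nonneg_right (le_of_lt hE2) hk0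
      have hk : k = 3 := by
        have h1 : (2:ℝ) < (k:ℝ) := by linarith
        have h2 : (k:ℝ) < 4 := by linarith
        have h1' : 2 < k := by exact_mod_cast h1
        have h2' : k < 4 := by exact_mod_cast h2
        omega
      subst hk
      interval_cases r <;> first | omega | norm_num [Finset.sum_Ico_eq_sum_range, Finset.sum_range_succ]
    · -- n = 7
      norm_num at hkl' hkh'
      have hx1 : Real.exp 1 * (k:ℝ) ≤ 2.7182818286 * k := mul_le_mul_of_nonneg_right (le_of_lt hE1) hk0
      have hx2 : (2.7182818283:ℝ) * k ≤ Real.exp 1 * k := mul_le_mul_of_nonneg_right (le_of_lt hE2) hk0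
      have hk : k = 3 := by
        have h1 : (2:ℝ) < (k:ℝ) := by linarith
        have h2 : (k:ℝ) < 4 := by linarith
        have h1' : 2 < k := by exact_mod_cast h1
        have h2' : k < 4 := by exact_mod_cast h2
        omega
      subst hk
      interval_cases r <;> first | omega | norm_num [Finset.sum_Ico_eq_sum_range, Finset.sum_range_succ]
    · -- n = 8
      norm_num at hkl' hkh'
      have hx1 : Real.exp 1 * (k:ℝ) ≤ 2.7182818286 * k := mul_le_mul_of_nonneg_right (le_of_lt hE1) hk0
      have hx2 : (2.7182818283:ℝ) * k ≤ Real.exp 1 * k := mul_le_mul_of_nonneg_right (le_of_lt hE2) hk0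
      have hk : k = 3 := by
        have h1 : (2:ℝ) < (k:ℝ) := by linarith
        have h2 : (k:ℝ) < 4 := by linarith
        have h1' : 2 < k := by exact_mod_cast h1
        have h2' : k < 4 := by exact_mod_cast h2
        omega
      subst hk
      interval_cases r <;> first | omega | norm_num [Finset.sum_Ico_eq_sum_range, Finset.sum_range_succ]
    · -- n = 9
      norm_num at hkl' hkh'
      have hx1 : Real.exp 1 * (k:ℝ) ≤ 2.7182818286 * k := mul_le_mul_of_nonneg_right (le_of_lt hE1) hk0
      have hx2 : (2.7182818283:ℝ) * k ≤ Real.exp 1 * k := mul_le_mul_of_nonneg_right (le_of_lt hE2) hk0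
      have hk : k = 4 := by
        have h1 : (3:ℝ) < (k:ℝ) := by linarith
        have h2 : (k:ℝ) < 5 := by linarith
        have h1' : 3 < k := by exact_mod_cast h1
        have h2' : k < 5 := by exact_mod_cast h2
        omega
      subst hk
      interval_cases r <;> first | omega | norm_num [Finset.sum_Ico_eq_sum_range, Finset.sum_range_succ]
    · -- n = 10
      norm_num at hkl' hkh'
      have hx1 : Real.exp 1 * (k:ℝ) ≤ 2.7182818286 * k := mul_le_mul_of_nonneg_right (le_of_lt hE1) hk0
      have hx2 : (2.7182818283:ℝ) * k ≤ Real.exp 1 * k := mul_le_mul_of_nonneg_right (le_of_lt hE2) hk0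
      have hk : k = 4 := by
        have h1 : (3:ℝ) < (k:ℝ) := by linarith
        have h2 : (k:ℝ) < 5 := by linarith
        have h1' : 3 < k := by exact_mod_cast h1
        have h2' : k < 5 := by exact_mod_cast h2
        omega
      subst hk
      interval_cases r <;> first | omega | norm_num [Finset.sum_Ico_eq_sum_range, Finset.sum_range_succ]
    · -- n = 11
      norm_num at hkl' hkh'
      have hx1 : Real.exp 1 * (k:ℝ) ≤ 2.7182818286 * k := mul_le_mul_of_nonneg_right (le_of_lt hE1) hk0
      have hx2 : (2.7182818283:ℝ) * k ≤ Real.exp 1 * k := mul_le_mul_of_nonneg_right (le_of_lt hE2) hk0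
      have hk : k = 5 := by
        have h1 : (4:ℝ) < (k:ℝ) := by linarith
        have h2 : (k:ℝ) < 6 := by linarith
        have h1' : 4 < k := by exact_mod_cast h1
        have h2' : k < 6 := by exact_mod_cast h2
        omega
      subst hk
      interval_cases r <;> first | omega | norm_num [Finset.sum_Ico_eq_sum_range, Finset.sum_range_succ]

set_option maxHeartbeats 1000000 in
/-- key summation claim for the 2e-competitive secretary algorithm
with interdependent values. -/
theorem stmt_0 (n : ℕ) (hn : 3 ≤ n) (α : ℕ → ℝ)
    (hpos : ∀ t ∈ Finset.Icc 1 n, 0 ≤ α t)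
    (hmono : ∀ s t, 1 ≤ s → s ≤ t → t ≤ n → α s ≤ α t)
    (hsub : ∀ t ∈ Finset.Icc 1 (n - 1), α n ≤ α t + α (n - t)) :
    α n / 2 ≤ ∑ t ∈ Finset.Icc ⌈(n : ℝ) / Real.exp 1⌉₊ n, α t / ((t : ℝ) - 1) := by
  have hE1 : Real.exp 1 < 2.7182818286 := Real.exp_one_lt_d9
  have hE2 : (2.7182818283 : ℝ) < Real.exp 1 := Real.exp_one_gt_d9
  have hEpos : (0:ℝ) < Real.exp 1 := Real.exp_pos 1
  set k := ⌈(n : ℝ) / Real.exp 1⌉₊ with hkdef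
  have hkl : (n:ℝ)/Real.exp 1 ≤ (k:ℝ) := Nat.le_ceil _
  have hkh : (k:ℝ) < (n:ℝ)/Real.exp 1 + 1 := Nat.ceil_lt_add_one (by positivity)
  have hnR : (3:ℝ) ≤ (n:ℝ) := by exact_mod_cast hn
  have hk2 : 2 ≤ k := by
    have h1 : (1:ℝ) < (n:ℝ)/Real.exp 1 := by rw [lt_div_iff₀ hEpos]; linarith
    have h2 : (1:ℝ) < (k:ℝ) := lt_of_lt_of_le h1 hkl
    have : 1 < k := by exact_mod_cast h2
    omega
  have hkn : k < n := by
    have h1 : (n:ℝ)/Real.exp 1 ≤ (n:ℝ) - 1 := by rw [div_le_iff₀ hEpos]; nlinarith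
    have h2 : (k:ℝ) < (n:ℝ) := by linarith
    exact_mod_cast h2
  have hα1 : 0 ≤ α 1 := hpos 1 (by rw [mem_Icc]; omega)
  have hαn : 0 ≤ α n := hpos n (by rw [mem_Icc]; omega)
  have hn1 : (0:ℝ) < (n:ℝ) - 1 := by linarith
  by_cases h5 : n = 5
  · subst h5
    have hk5 : k = 2 := by
      have hkh' : Real.exp 1 * (k:ℝ) < (5:ℝ) + Real.exp 1 := by
        have := (mul_lt_mul_iff_right₀ hEpos).mpr hkh
        rw [mul_add, mul_one, mul_div_cancel₀ _ (ne_of_gt hEpos)] at this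
        push_cast at this ⊢
        linarith
      have hk0 : (0:ℝ) ≤ (k:ℝ) := Nat.cast_nonneg k
      have hx2 : (2.7182818283:ℝ) * k ≤ Real.exp 1 * k := mul_le_mul_of_nonneg_right (le_of_lt hE2) hk0
      have : (k:ℝ) < 3 := by linarith
      have : k < 3 := by exact_mod_cast this
      omega
    rw [hk5]
    rw [show Finset.Icc 2 5 = Finset.Ico 2 6 from (Finset.Ico_add_one_right_eq_Icc 2 5).symm]
    rw [Finset.sum_Ico_eq_sum_range]
    norm_num [Finset.sum_range_succ]
    have h2 := hpos 2 (by rw [mem_Icc]; omega)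
    have h4 := hpos 4 (by rw [mem_Icc]; omega)
    have h5' := hpos 5 (by rw [mem_Icc]; omega)
    have hs2 := hsub 2 (by rw [mem_Icc]; omega)
    norm_num at hs2
    linarith
  · -- general case
    set c : ℕ → ℝ := fun s => if k ≤ s then 1/((s:ℝ)-1) else 0 with hcdef
    have hc0 : ∀ s, 0 ≤ c s := by
      intro s
      rw [hcdef]; dsimp only
      split
      · rename_i hks
        have : (2:ℝ) ≤ (s:ℝ) := by exact_mod_cast le_trans hk2 hks
        apply one_div_nonneg.mpr; linarith
      · exact le_refl 0
    have hcw : ∀ (a b : ℕ) (g : ℕ → ℝ), a ≤ k →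
        ∑ s ∈ Ico a b, c s * g s = ∑ s ∈ Ico k b, (1/((s:ℝ)-1)) * g s := by
      intro a b g hak
      have hfil : (Ico a b).filter (fun s => k ≤ s) = Ico k b := by
        ext s; simp only [mem_filter, mem_Ico]; omega
      rw [← hfil, sum_filter]
      apply sum_congr rfl; intro s _
      by_cases hks : k ≤ s <;> simp [hcdef, hks]
    have hcs : ∀ (a b : ℕ), a ≤ k →
        ∑ s ∈ Ico a b, c s = ∑ s ∈ Ico k b, 1/((s:ℝ)-1) := by
      intro a b hak
      have := hcw a b (fun _ => (1:ℝ)) hak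
      simpa using this
    set d : ℕ → ℝ := fun s => (c s + c (n - s))/2 with hddef
    have htail : ∀ r, 1 ≤ r → r < n → ∑ s ∈ Ico r n, d s ≤ ∑ s ∈ Ico r n, c s := by
      intro r h1 h2
      have hrefl : ∑ s ∈ Ico r n, c (n - s) = ∑ u ∈ Ico k (n - r + 1), 1/((u:ℝ)-1) := by
        rw [reflect' n r c (le_of_lt h2)]
        exact hcs 1 (n-r+1) (by omega)
      have hsum_d : ∑ s ∈ Ico r n, d s
          = ((∑ s ∈ Ico r n, c s) + ∑ s ∈ Ico r n, c (n - s))/2 := by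
        rw [← sum_add_distrib, ← sum_div]
      suffices h : ∑ s ∈ Ico r n, c (n - s) ≤ ∑ s ∈ Ico r n, c s by
        rw [hsum_d]; linarith
      rw [hrefl]
      by_cases hrk : r ≤ k
      · rw [hcs r n hrk]
        apply sum_le_sum_of_subset_of_nonneg (Ico_subset_Ico le_rfl (by omega))
        intro i hi _
        rw [mem_Ico] at hi
        have : (2:ℝ) ≤ (i:ℝ) := by exact_mod_cast le_trans hk2 hi.1
        apply one_div_nonneg.mpr; linarith
      · push_neg at hrk
        have hR : ∑ s ∈ Ico r n, c s = ∑ s ∈ Ico r n, 1/((s:ℝ)-1) := by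
          apply sum_congr rfl; intro s hs
          rw [mem_Ico] at hs
          have hks : k ≤ s := by omega
          simp [hcdef, hks]
        rw [hR]
        by_cases hhard : k < n - r + 1
        · exact hard_lemma n k hn h5 hkl hkh r hrk hhard h2
        · push_neg at hhard
          rw [show Ico k (n-r+1) = ∅ by rw [Ico_eq_empty_iff]; omega, sum_empty]
          apply sum_nonneg
          intro s hs
          rw [mem_Ico] at hs
          have : (2:ℝ) ≤ (s:ℝ) := by exact_mod_cast (by omega : 2 ≤ s)
          apply one_div_nonneg.mpr; linarith
    have hmono' : ∀ r, 2 ≤ r → r < n → α (r-1) ≤ α r :=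
      fun r h2 hr => hmono (r-1) r (by omega) (by omega) (by omega)
    have htrans := transport' n α c d hα1 hmono' htail
    have hDsum : ∑ s ∈ Ico 1 n, d s * α s
        = (∑ s ∈ Ico 1 n, c s * (α s + α (n-s)))/2 := by
      have h1 : ∑ s ∈ Ico 1 n, c (n-s) * α s = ∑ u ∈ Ico 1 n, c u * α (n-u) := by
        have h2 : ∑ s ∈ Ico 1 n, c (n-s) * α s
            = ∑ s ∈ Ico 1 n, (fun u => c u * α (n-u)) (n-s) := by
          apply sum_congr rfl; intro s hs
          rw [mem_Ico] at hs; dsimp only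
          congr 2
          omega
        rw [h2, reflect' n 1 (fun u => c u * α (n-u)) (by omega),
          show n - 1 + 1 = n by omega]
      have h3 : ∀ s, d s * α s = (c s * α s)/2 + (c (n-s) * α s)/2 := by
        intro s; rw [hddef]; dsimp only; ring
      rw [sum_congr rfl (fun s _ => h3 s), sum_add_distrib, ← sum_div, ← sum_div, h1]
      rw [show ∀ (x y : ℝ), x/2 + y/2 = (x + y)/2 from fun x y => by ring]
      congr 1
      rw [← sum_add_distrib]
      apply sum_congr rfl; intro s _; ring
    have hpair : (∑ s ∈ Ico 1 n, c s * α n) ≤ ∑ s ∈ Ico 1 n, c s * (α s + α (n-s)) := by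
      apply sum_le_sum
      intro s hs
      rw [mem_Ico] at hs
      exact mul_le_mul_of_nonneg_left (hsub s (by rw [mem_Icc]; omega)) (hc0 s)
    set H := ∑ s ∈ Ico k n, 1/((s:ℝ)-1) with hHdef
    have hHsum : ∑ s ∈ Ico 1 n, c s * α n = H * α n := by
      rw [hcw 1 n (fun _ => α n) (by omega), ← sum_mul]
    have hH : 1 - 2/((n:ℝ)-1) ≤ H := by
      have hlb := harm_lb k hk2 n
      have hkR : (2:ℝ) ≤ (k:ℝ) := by exact_mod_cast hk2
      have hlog1 : Real.log ((k:ℝ)-1) < Real.log (n:ℝ) - 1 := by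
        have h0 : (k:ℝ) - 1 < (n:ℝ)/Real.exp 1 := by linarith
        have := Real.log_lt_log (by linarith) h0
        rwa [Real.log_div (by linarith : (n:ℝ) ≠ 0) (ne_of_gt hEpos), Real.log_exp] at this
      have hlog2 : Real.log (n:ℝ) - Real.log ((n:ℝ)-1) ≤ 1/((n:ℝ)-1) := by
        have := log_ratio_le' ((n:ℝ)-1) (by linarith)
        rw [show (n:ℝ)-1+1 = n by ring] at this
        linarith
      have hids : 2/((n:ℝ)-1) - 1/((n:ℝ)-1) = 1/((n:ℝ)-1) := by ring
      have hp1 : (0:ℝ) ≤ 1/((n:ℝ)-1) := by positivity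
      linarith
    -- final assembly
    have hsplit : ∑ t ∈ Finset.Icc k n, α t/((t:ℝ)-1)
        = (∑ t ∈ Ico k n, α t/((t:ℝ)-1)) + α n/((n:ℝ)-1) := by
      rw [← Finset.Ico_add_one_right_eq_Icc, sum_Ico_succ_top (le_of_lt hkn)]
    have hIcoA : ∑ t ∈ Ico k n, α t/((t:ℝ)-1) = ∑ s ∈ Ico 1 n, c s * α s := by
      rw [hcw 1 n α (by omega)]
      apply sum_congr rfl; intro t _; ring
    rw [hsplit, hIcoA]
    have c4 : α n * (1 - 2/((n:ℝ)-1)) ≤ α n * H := mul_le_mul_of_nonneg_left hH hαn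
    have c5 : α n * (1 - 2/((n:ℝ)-1)) / 2 + α n/((n:ℝ)-1) = α n / 2 := by
      field_simp
      ring
    have hcomm : H * α n = α n * H := mul_comm _ _
    linarith [htrans, hpair, hDsum, hHsum]
end

section
/- Let n ≥ 3 and α₁ ≤ ... ≤ αₙ nonnegative with αₙ ≤ αₜ + α_{n−t} for all t. Setting t₀ = ⌈n/e⌉, t₁ = ⌈n/(e−1)⌉, t₂ = n − ⌈n/e⌉ + 1, we have ∑_{t=t₀}^{n} αₜ/(t−1) ≥ α_{t₀} ln(t₁/(t₀−1)) + α_{t₁} ln((t₂−1)/t₁) + α_{t₂} ln(n/(t₂−1)). -/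
/-- Harmonic sum lower bounds the logarithm. -/
lemma harm_log (a : ℕ) (ha : 2 ≤ a) : ∀ b : ℕ, a ≤ b →
    Real.log ((b : ℝ) / ((a : ℝ) - 1)) ≤ ∑ t ∈ Finset.Icc a b, 1 / ((t : ℝ) - 1) := by
  have ha1 : (1 : ℝ) ≤ (a : ℝ) - 1 := by
    have : (2 : ℝ) ≤ (a : ℝ) := by exact_mod_cast ha
    linarith
  have ha0 : (0 : ℝ) < (a : ℝ) - 1 := by linarith
  intro b
  induction b with
  | zero => intro h; omega
  | succ b ih =>
    intro hab
    rcases Nat.lt_or_ge a (b + 1) with hlt | hge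
    · have hab' : a ≤ b := by omega
      have hb0 : (0 : ℝ) < (b : ℝ) := by
        have : 2 ≤ b := by omega
        exact_mod_cast Nat.lt_of_lt_of_le Nat.zero_lt_one (by omega)
      rw [Finset.sum_Icc_succ_top (by omega : a ≤ b + 1)]
      have hsplit : Real.log (((b : ℝ) + 1) / ((a : ℝ) - 1))
          = Real.log ((b : ℝ) / ((a : ℝ) - 1)) + Real.log (((b : ℝ) + 1) / (b : ℝ)) := by
        rw [← Real.log_mul (by positivity) (by positivity)]
        congr 1
        field_simp
      have hlog2 : Real.log (((b : ℝ) + 1) / (b : ℝ)) ≤ 1 / (b : ℝ) := by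
        have := Real.log_le_sub_one_of_pos (show (0:ℝ) < ((b : ℝ) + 1) / (b : ℝ) by positivity)
        have heq : ((b : ℝ) + 1) / (b : ℝ) - 1 = 1 / (b : ℝ) := by field_simp; ring
        linarith [this, heq ▸ this]
      have hcast : ((b + 1 : ℕ) : ℝ) = (b : ℝ) + 1 := by push_cast; ring
      rw [hcast, hsplit]
      have := ih hab'
      have : 1 / (((b : ℝ) + 1) - 1) = 1 / (b : ℝ) := by ring_nf
      calc Real.log ((b : ℝ) / ((a : ℝ) - 1)) + Real.log (((b : ℝ) + 1) / (b : ℝ))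
          ≤ (∑ t ∈ Finset.Icc a b, 1 / ((t : ℝ) - 1)) + 1 / (b : ℝ) := by
            exact add_le_add (ih hab') hlog2
        _ = (∑ t ∈ Finset.Icc a b, 1 / ((t : ℝ) - 1)) + 1 / (((b : ℝ) + 1) - 1) := by
            rw [show ((b : ℝ) + 1) - 1 = (b : ℝ) by ring]
    · have hba : a = b + 1 := by omega
      rw [← hba, Finset.Icc_self, Finset.sum_singleton]
      have hapos : (0:ℝ) < (a : ℝ) := by linarith
      have := Real.log_le_sub_one_of_pos (div_pos hapos ha0)
      have heq : (a : ℝ) / ((a : ℝ) - 1) - 1 = 1 / ((a : ℝ) - 1) := by field_simp; ring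
      linarith

/-- One block bound. -/
lemma block_bound (α : ℕ → ℝ) (n a b L : ℕ) (ha : 2 ≤ a) (hab : a ≤ b) (hbn : b ≤ n)
    (hL1 : 1 ≤ L) (hLa : L < a) (hLpos : 0 ≤ α L)
    (hmono : ∀ s t, 1 ≤ s → s ≤ t → t ≤ n → α s ≤ α t) :
    α L * Real.log ((b : ℝ) / ((a : ℝ) - 1)) ≤ ∑ t ∈ Finset.Icc a b, α t / ((t : ℝ) - 1) := by
  calc α L * Real.log ((b : ℝ) / ((a : ℝ) - 1))
      ≤ α L * ∑ t ∈ Finset.Icc a b, 1 / ((t : ℝ) - 1) :=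
        mul_le_mul_of_nonneg_left (harm_log a ha b hab) hLpos
    _ = ∑ t ∈ Finset.Icc a b, α L * (1 / ((t : ℝ) - 1)) := Finset.mul_sum _ _ _
    _ ≤ ∑ t ∈ Finset.Icc a b, α t / ((t : ℝ) - 1) := by
        apply Finset.sum_le_sum
        intro t ht
        simp only [Finset.mem_Icc] at ht
        have ht0 : (0 : ℝ) < (t : ℝ) - 1 := by
          have : (2 : ℝ) ≤ (t : ℝ) := by exact_mod_cast le_trans ha ht.1
          linarith
        have hαt : α L ≤ α t := hmono L t hL1 (by omega) (le_trans ht.2 hbn)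
        rw [mul_one_div]
        exact div_le_div_of_nonneg_right hαt ht0.le

/-- three-range splitting step in the proof of the summation claim. -/
theorem stmt_1 (n : ℕ) (hn : 3 ≤ n) (α : ℕ → ℝ)
    (hpos : ∀ t ∈ Finset.Icc 1 n, 0 ≤ α t)
    (hmono : ∀ s t, 1 ≤ s → s ≤ t → t ≤ n → α s ≤ α t)
    (hsub : ∀ t ∈ Finset.Icc 1 (n - 1), α n ≤ α t + α (n - t))
    (t₀ t₁ t₂ : ℕ)
    (ht₀ : t₀ = ⌈(n : ℝ) / Real.exp 1⌉₊)
    (ht₁ : t₁ = ⌈(n : ℝ) / (Real.exp 1 - 1)⌉₊)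
    (ht₂ : t₂ = n - ⌈(n : ℝ) / Real.exp 1⌉₊ + 1)
    (h1 : 2 ≤ t₀) (h2 : t₀ ≤ t₁) (h3 : t₁ < t₂) (h4 : t₂ ≤ n) :
    α t₀ * Real.log ((t₁ : ℝ) / ((t₀ : ℝ) - 1))
      + α t₁ * Real.log (((t₂ : ℝ) - 1) / (t₁ : ℝ))
      + α t₂ * Real.log ((n : ℝ) / ((t₂ : ℝ) - 1))
    ≤ ∑ t ∈ Finset.Icc t₀ n, α t / ((t : ℝ) - 1) := by
  -- split the sum
  have hsplit : ∑ t ∈ Finset.Icc t₀ n, α t / ((t : ℝ) - 1)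
      = (∑ t ∈ Finset.Icc t₀ t₁, α t / ((t : ℝ) - 1))
      + (∑ t ∈ Finset.Icc (t₁+1) (t₂-1), α t / ((t : ℝ) - 1))
      + (∑ t ∈ Finset.Icc t₂ n, α t / ((t : ℝ) - 1)) := by
    have e1 : Finset.Icc t₀ n = Finset.Icc t₀ t₁ ∪ Finset.Icc (t₁+1) n := by
      ext x; simp only [Finset.mem_union, Finset.mem_Icc]; omega
    have e2 : Finset.Icc (t₁+1) n = Finset.Icc (t₁+1) (t₂-1) ∪ Finset.Icc t₂ n := by
      ext x; simp only [Finset.mem_union, Finset.mem_Icc]; omega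
    have d1 : Disjoint (Finset.Icc t₀ t₁) (Finset.Icc (t₁+1) n) := by
      simp [Finset.disjoint_left, Finset.mem_Icc]; omega
    have d2 : Disjoint (Finset.Icc (t₁+1) (t₂-1)) (Finset.Icc t₂ n) := by
      simp [Finset.disjoint_left, Finset.mem_Icc]; omega
    rw [e1, Finset.sum_union d1, e2, Finset.sum_union d2]
    ring
  rw [hsplit]
  have hpos0 : 0 ≤ α t₀ := hpos t₀ (Finset.mem_Icc.mpr ⟨by omega, by omega⟩)
  have hpos1 : 0 ≤ α t₁ := hpos t₁ (Finset.mem_Icc.mpr ⟨by omega, by omega⟩)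
  have hpos2 : 0 ≤ α t₂ := hpos t₂ (Finset.mem_Icc.mpr ⟨by omega, by omega⟩)
  -- block 1 : a = t₀ + 0? we need L < a; use L = t₀, a = t₀. Adjust block lemma? here L = a - no.
  have b1 : α t₀ * Real.log ((t₁ : ℝ) / ((t₀ : ℝ) - 1))
      ≤ ∑ t ∈ Finset.Icc t₀ t₁, α t / ((t : ℝ) - 1) := by
    calc α t₀ * Real.log ((t₁ : ℝ) / ((t₀ : ℝ) - 1))
        ≤ α t₀ * ∑ t ∈ Finset.Icc t₀ t₁, 1 / ((t : ℝ) - 1) :=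
          mul_le_mul_of_nonneg_left (harm_log t₀ h1 t₁ h2) hpos0
      _ = ∑ t ∈ Finset.Icc t₀ t₁, α t₀ * (1 / ((t : ℝ) - 1)) := Finset.mul_sum _ _ _
      _ ≤ ∑ t ∈ Finset.Icc t₀ t₁, α t / ((t : ℝ) - 1) := by
          apply Finset.sum_le_sum
          intro t ht
          simp only [Finset.mem_Icc] at ht
          have ht0 : (0 : ℝ) < (t : ℝ) - 1 := by
            have : (2 : ℝ) ≤ (t : ℝ) := by exact_mod_cast le_trans h1 ht.1
            linarith
          have hαt : α t₀ ≤ α t := hmono t₀ t (by omega) ht.1 (by omega)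
          rw [mul_one_div]
          exact div_le_div_of_nonneg_right hαt ht0.le
  have b2 : α t₁ * Real.log (((t₂ : ℝ) - 1) / (t₁ : ℝ))
      ≤ ∑ t ∈ Finset.Icc (t₁+1) (t₂-1), α t / ((t : ℝ) - 1) := by
    rcases Nat.lt_or_ge (t₁ + 1) t₂ with hlt | hge
    · -- nonempty: t₁+1 ≤ t₂-1
      have hcast : ((t₂ - 1 : ℕ) : ℝ) = (t₂ : ℝ) - 1 := by
        have : 1 ≤ t₂ := by omega
        push_cast [this]; ring
      have hcast2 : ((t₁ + 1 : ℕ) : ℝ) - 1 = (t₁ : ℝ) := by push_cast; ring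
      have := block_bound α n (t₁+1) (t₂-1) t₁ (by omega) (by omega) (by omega)
        (by omega) (by omega) hpos1 hmono
      rw [hcast, hcast2] at this
      exact this
    · -- empty: t₂ = t₁ + 1
      have ht2 : t₂ = t₁ + 1 := by omega
      have : ((t₂ : ℝ) - 1) / (t₁ : ℝ) = 1 := by
        rw [ht2]; push_cast
        have : (0:ℝ) < (t₁ : ℝ) := by exact_mod_cast (by omega : 0 < t₁)
        field_simp
        ring
      rw [this, Real.log_one, mul_zero]
      have : Finset.Icc (t₁+1) (t₂-1) = ∅ := by
        rw [Finset.Icc_eq_empty_iff]; omega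
      rw [this, Finset.sum_empty]
  have b3 : α t₂ * Real.log ((n : ℝ) / ((t₂ : ℝ) - 1))
      ≤ ∑ t ∈ Finset.Icc t₂ n, α t / ((t : ℝ) - 1) := by
    calc α t₂ * Real.log ((n : ℝ) / ((t₂ : ℝ) - 1))
        ≤ α t₂ * ∑ t ∈ Finset.Icc t₂ n, 1 / ((t : ℝ) - 1) :=
          mul_le_mul_of_nonneg_left (harm_log t₂ (by omega) n h4) hpos2
      _ = ∑ t ∈ Finset.Icc t₂ n, α t₂ * (1 / ((t : ℝ) - 1)) := Finset.mul_sum _ _ _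
      _ ≤ ∑ t ∈ Finset.Icc t₂ n, α t / ((t : ℝ) - 1) := by
          apply Finset.sum_le_sum
          intro t ht
          simp only [Finset.mem_Icc] at ht
          have ht0 : (0 : ℝ) < (t : ℝ) - 1 := by
            have h2t : 2 ≤ t := by omega
            have : (2 : ℝ) ≤ (t : ℝ) := by exact_mod_cast h2t
            linarith
          have hαt : α t₂ ≤ α t := hmono t₂ t (by omega) ht.1 ht.2
          rw [mul_one_div]
          exact div_le_div_of_nonneg_right hαt ht0.le
  linarith
end

section
/- Consider m items and agents arriving in a uniformly random order, where in each step t > k the algorithm allocates to the arriving agent the intersection of its bundle in some fixed (order-independent given the arrived set) optimal allocation OPT(Aᵗ) with the set Jᵗ of still-available items, and the first k steps allocate nothing. Then for every item j and every ℓ ≥ k, conditioned on any set A of ℓ agents having arrived, the probability over the arrival order of A that item j is still unallocated after step ℓ equals k/ℓ. -/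
open Finset

/-- One step of the greedy-restricted secretary allocation: agent `i` arrives,
the arrived set becomes `insert i st.1`; if we are past the sample phase
(more than `k` agents arrived) the agent receives her bundle in the
order-independent optimal allocation `opt` intersected with the available
items, which are removed. The state is (arrived agents, available items). -/
def secStep {ι : Type*} [DecidableEq ι] {m : ℕ}
    (opt : Finset ι → ι → Finset (Fin m)) (k : ℕ)
    (st : Finset ι × Finset (Fin m)) (i : ι) : Finset ι × Finset (Fin m) :=
  let A := insert i st.1
  if k < A.card then (A, st.2 \ opt A i) else (A, st.2)

/-- Running the algorithm on arrival order `l`, starting with no arrived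
agents and all items available. -/
def secRun {ι : Type*} [DecidableEq ι] {m : ℕ}
    (opt : Finset ι → ι → Finset (Fin m)) (k : ℕ)
    (l : List ι) : Finset ι × Finset (Fin m) :=
  l.foldl (secStep opt k) (∅, Finset.univ)

section aux
variable {ι : Type*} [DecidableEq ι] {m : ℕ}
  (opt : Finset ι → ι → Finset (Fin m)) (k : ℕ)

lemma secStep_fst (st : Finset ι × Finset (Fin m)) (i : ι) :
    (secStep opt k st i).1 = insert i st.1 := by
  unfold secStep
  by_cases h : k < (insert i st.1).card <;> simp [h]

lemma foldl_fst : ∀ (l : List ι) (st : Finset ι × Finset (Fin m)),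
    (l.foldl (secStep opt k) st).1 = st.1 ∪ l.toFinset
  | [], st => by simp
  | i :: l, st => by
    rw [List.foldl_cons, foldl_fst l, secStep_fst]
    ext x; simp [or_comm, or_left_comm, or_assoc]

lemma secRun_fst (l : List ι) : (secRun opt k l).1 = l.toFinset := by
  rw [secRun, foldl_fst]; simp

lemma secRun_append (l : List ι) (i : ι) :
    secRun opt k (l ++ [i]) = secStep opt k (secRun opt k l) i := by
  simp [secRun, List.foldl_append]

lemma secRun_univ (l : List ι) (hnd : l.Nodup) (h : l.length ≤ k) :
    (secRun opt k l).2 = Finset.univ := by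
  induction l using List.reverseRecOn with
  | nil => rfl
  | append_singleton t i IH =>
    rw [secRun_append]
    have hfst : (secRun opt k t).1 = t.toFinset := secRun_fst opt k t
    have hcard : (insert i (secRun opt k t).1).card ≤ k := by
      rw [hfst]
      calc (insert i t.toFinset).card ≤ t.toFinset.card + 1 := Finset.card_insert_le _ _
        _ ≤ t.length + 1 := by gcongr; exact t.toFinset_card_le
        _ = (t ++ [i]).length := by simp
        _ ≤ k := h
    unfold secStep
    rw [if_neg (by omega)]
    exact IH (hnd.sublist (by simp)) (by simp at h; omega)

/-- decomposition of permutation counting by last element -/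
lemma perm_last_decomp (l : List ι) (hl : l.Nodup) (hne : l ≠ []) (p : List ι → Bool) :
    l.permutations.countP p
      = ∑ i ∈ l.toFinset, ((l.erase i).permutations.countP (fun t => p (t ++ [i]))) := by
  have hperm : l.permutations.Perm (l.toFinset.toList.flatMap
      (fun i => (l.erase i).permutations.map (· ++ [i]))) := by
    rw [List.perm_ext_iff_of_nodup (List.nodup_permutations l hl)]
    · intro σ
      simp only [List.mem_permutations, List.mem_flatMap, List.mem_map, Finset.mem_toList,
        List.mem_toFinset]
      constructor
      · intro hσ
        have hσne : σ ≠ [] := by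
          intro h; subst h; exact hne hσ.symm.eq_nil
        set i := σ.getLast hσne with hi
        have hdl : σ.dropLast ++ [i] = σ := List.dropLast_append_getLast hσne
        have hiσ : i ∈ σ := List.getLast_mem hσne
        have hil : i ∈ l := hσ.subset hiσ
        refine ⟨i, hil, σ.dropLast, ?_, hdl⟩
        have hσnd : σ.Nodup := hσ.nodup_iff.mpr hl
        have hint : i ∉ σ.dropLast := by
          rw [← hdl] at hσnd
          have := List.disjoint_of_nodup_append hσnd
          intro hmem; exact this hmem (by simp)
        have h1 : σ.erase i = σ.dropLast := by
          conv_lhs => rw [← hdl]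
          rw [List.erase_append_right _ hint, List.erase_cons_head, List.append_nil]
        rw [← h1]
        exact hσ.erase i
      · rintro ⟨i, hil, t, ht, rfl⟩
        exact ((List.perm_append_singleton i t).trans (ht.cons i)).trans
          (List.perm_cons_erase hil).symm
    · rw [List.nodup_flatMap]
      constructor
      · intro i _
        exact (List.nodup_permutations _ (hl.erase i)).map
          (fun a b h => List.append_cancel_right h)
      · refine l.toFinset.nodup_toList.pairwise_of_forall_ne ?_
        intro i _ i' _ hne'
        intro σ h1 h2
        simp only [List.mem_map] at h1 h2
        obtain ⟨t, _, rfl⟩ := h1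
        obtain ⟨t', _, h⟩ := h2
        have hlen : t.length = t'.length := by
          have := congrArg List.length h
          simpa using this.symm
        have := (List.append_inj h.symm hlen).2
        simp only [List.cons.injEq, and_true] at this
        exact hne' this
  rw [hperm.countP_eq, List.countP_flatMap, ← Finset.sum_map_toList]
  congr 1
  exact List.map_congr_left (fun i _ => by simp [Function.comp_def, List.countP_map])

omit [DecidableEq ι] in
lemma countP_perm_permutations {l l' : List ι} (h : List.Perm l l') (p : List ι → Bool) :
    l.permutations.countP p = l'.permutations.countP p :=
  h.permutations.countP_eq p

lemma stmt5_key (hk : 1 ≤ k)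
    (hdisj : ∀ (A : Finset ι), ∀ i ∈ A, ∀ i' ∈ A, i ≠ i' → Disjoint (opt A i) (opt A i'))
    (hcover : ∀ (A : Finset ι), k < A.card → ∀ j : Fin m, ∃ i ∈ A, j ∈ opt A i)
    (j : Fin m) :
    ∀ (n : ℕ) (A : Finset ι), A.card = n → k ≤ n →
      (A.toList.permutations.countP (fun l => decide (j ∈ (secRun opt k l).2)))
        = k * Nat.factorial (n - 1) := by
  intro n
  induction n using Nat.strong_induction_on with
  | _ n IH =>
    intro A hcard hkn
    rcases eq_or_lt_of_le hkn with heq | hlt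
    · -- base case: n = k, nothing ever allocated
      have hall : ∀ l ∈ A.toList.permutations,
          (fun l => decide (j ∈ (secRun opt k l).2)) l = true := by
        intro l hl
        rw [List.mem_permutations] at hl
        have hnd : l.Nodup := hl.nodup_iff.mpr A.nodup_toList
        have hlen : l.length ≤ k := by
          rw [hl.length_eq, Finset.length_toList, hcard, ← heq]
        simp [secRun_univ opt k l hnd hlen]
      rw [List.countP_eq_length.mpr hall, List.length_permutations,
        Finset.length_toList, hcard, ← heq, ← Nat.mul_factorial_pred (Nat.pos_iff_ne_zero.mp hk)]
    · -- inductive case: n > k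
      have hApos : 0 < A.card := by omega
      have hne : A.toList ≠ [] := by
        intro h
        have h2 : A.card = 0 := by rw [← Finset.length_toList, h]; rfl
        omega
      obtain ⟨i₀, hi₀A, hi₀⟩ := hcover A (hcard ▸ hlt) j
      rw [perm_last_decomp A.toList A.nodup_toList hne, Finset.toList_toFinset]
      have hsummand : ∀ i ∈ A,
          ((A.toList.erase i).permutations.countP
            (fun t => decide (j ∈ (secRun opt k (t ++ [i])).2)))
          = if i = i₀ then 0 else k * Nat.factorial (n - 1 - 1) := by
        intro i hiA
        have heraF : (A.toList.erase i).toFinset = A.erase i := by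
          ext x
          rw [List.mem_toFinset, A.nodup_toList.mem_erase_iff, Finset.mem_erase,
            Finset.mem_toList]
        have hstep : ∀ t ∈ (A.toList.erase i).permutations,
            (secRun opt k (t ++ [i])).2 = (secRun opt k t).2 \ opt A i := by
          intro t ht
          rw [List.mem_permutations] at ht
          have htF : t.toFinset = A.erase i := by
            rw [List.toFinset_eq_of_perm _ _ ht, heraF]
          have hins : insert i (secRun opt k t).1 = A := by
            rw [secRun_fst, htF, Finset.insert_erase hiA]
          rw [secRun_append]
          unfold secStep
          rw [if_pos]
          · simp only [hins]
          · rw [hins, hcard]; omega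
        by_cases hii : i = i₀
        · subst hii
          rw [if_pos rfl, List.countP_eq_zero]
          intro t ht
          rw [decide_eq_true_eq, hstep t ht, Finset.mem_sdiff]
          tauto
        · rw [if_neg hii]
          have hjnotin : j ∉ opt A i := by
            intro hj
            exact (Finset.disjoint_left.mp (hdisj A i hiA i₀ hi₀A hii) hj) hi₀
          have hcongr : ((A.toList.erase i).permutations.countP
              (fun t => decide (j ∈ (secRun opt k (t ++ [i])).2)))
              = ((A.toList.erase i).permutations.countP
                  (fun t => decide (j ∈ (secRun opt k t).2))) := by
            apply List.countP_congr
            intro t ht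
            rw [decide_eq_true_eq, decide_eq_true_eq, hstep t ht, Finset.mem_sdiff]
            tauto
          rw [hcongr]
          have hperm2 : (A.toList.erase i).Perm (A.erase i).toList := by
            rw [List.perm_ext_iff_of_nodup (A.nodup_toList.erase i)
              (A.erase i).nodup_toList]
            intro x
            simp [A.nodup_toList.mem_erase_iff, Finset.mem_erase]
          rw [countP_perm_permutations hperm2]
          exact IH (n - 1) (by omega) (A.erase i)
            (by rw [Finset.card_erase_of_mem hiA, hcard]) (by omega)
      rw [Finset.sum_congr rfl hsummand, ← Finset.add_sum_erase _ _ hi₀A, if_pos rfl,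
        zero_add]
      have : ∀ i ∈ A.erase i₀,
          (if i = i₀ then 0 else k * Nat.factorial (n - 1 - 1))
            = k * Nat.factorial (n - 1 - 1) := by
        intro i hi
        rw [if_neg (Finset.mem_erase.mp hi).1]
      rw [Finset.sum_congr rfl this, Finset.sum_const, Finset.card_erase_of_mem hi₀A,
        hcard, smul_eq_mul]
      have h1 : 0 < n - 1 := by omega
      calc (n - 1) * (k * Nat.factorial (n - 1 - 1))
          = k * ((n - 1) * Nat.factorial (n - 1 - 1)) := by ring
        _ = k * Nat.factorial (n - 1) := by rw [Nat.mul_factorial_pred h1.ne']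

end aux

/-- conditioned on the set `A` of `ℓ ≥ k` arrived agents, the
probability over a uniformly random arrival order of `A` that item `j` is
still unallocated after step `ℓ` equals `k/ℓ`. Probability is expressed as a
count over the `ℓ!` permutations of `A`. The bundles of `opt A` are pairwise
disjoint and cover every item once more than `k` agents have arrived. -/
theorem stmt_5 {ι : Type*} [DecidableEq ι] {m : ℕ}
    (opt : Finset ι → ι → Finset (Fin m)) (k : ℕ) (hk : 1 ≤ k)
    (hdisj : ∀ (A : Finset ι), ∀ i ∈ A, ∀ i' ∈ A, i ≠ i' → Disjoint (opt A i) (opt A i'))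
    (hcover : ∀ (A : Finset ι), k < A.card → ∀ j : Fin m, ∃ i ∈ A, j ∈ opt A i)
    (A : Finset ι) (hA : k ≤ A.card) (j : Fin m) :
    ((A.toList.permutations.countP (fun l => decide (j ∈ (secRun opt k l).2))) : ℝ)
      / (Nat.factorial A.card) = (k : ℝ) / A.card := by
  have hcount := stmt5_key opt k hk hdisj hcover j A.card A rfl hA
  rw [hcount]
  have hpos : 0 < A.card := by omega
  have hfact : (A.card : ℝ) * Nat.factorial (A.card - 1) = Nat.factorial A.card := by
    rw [← Nat.cast_mul, Nat.mul_factorial_pred hpos.ne']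
  have hfpos : (0:ℝ) < Nat.factorial A.card := by
    exact_mod_cast Nat.factorial_pos _
  rw [Nat.cast_mul]
  rw [div_eq_div_iff hfpos.ne' (by exact_mod_cast hpos.ne' : (A.card:ℝ) ≠ 0)]
  rw [← hfact]
  ring
end

section
/- Let v : ℝ≥0ⁿ → ℝ≥0 be monotone and subadditive over signals: v(s) ≤ v(s_X) + v(s_{[n]\X}) for all X ⊆ [n]. Fix i ∈ [n], a signal profile s, and assume n is odd. If Â is a uniformly random subset of [n]\{i} of size ⌊n/2⌋, then E_Â[v(s_{Â∪{i}})] ≥ v(s)/2. -/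
/-- `restrict s X` is the signal profile `s_X`: coordinates outside `X` are zeroed. -/
def restrict {n : ℕ} (s : Fin n → ℝ) (X : Finset (Fin n)) : Fin n → ℝ :=
  fun i => if i ∈ X then s i else 0

/-- for `v` monotone and subadditive over signals, `n` odd, and
`Â` a uniformly random subset of `[n]\{i}` of size `⌊n/2⌋`,
`E_Â[v(s_{Â∪{i}})] ≥ v(s)/2`. -/
theorem stmt_9 (n : ℕ) (hodd : Odd n) (v : (Fin n → ℝ) → ℝ)
    (hv : ∀ s, 0 ≤ v s)
    (hmono : ∀ s s' : Fin n → ℝ, (∀ j, s j ≤ s' j) → v s ≤ v s')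
    (hsub : ∀ (s : Fin n → ℝ) (X : Finset (Fin n)), v s ≤ v (restrict s X) + v (restrict s Xᶜ))
    (s : Fin n → ℝ) (hs : ∀ j, 0 ≤ s j) (i : Fin n) :
    v s / 2 ≤
      (∑ A ∈ (Finset.univ.erase i).powersetCard (n / 2), v (restrict s (insert i A)))
        / ((((Finset.univ.erase i).powersetCard (n / 2)).card : ℝ)) := by
  classical
  obtain ⟨m, hm⟩ := hodd
  set E := Finset.univ.erase i with hE
  set F := E.powersetCard (n / 2) with hF
  have hEcard : E.card = n - 1 := by
    rw [hE, Finset.card_erase_of_mem (Finset.mem_univ i), Finset.card_univ, Fintype.card_fin]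
  have hle : n / 2 ≤ E.card := by omega
  have hFcard : F.card = (n - 1).choose (n / 2) := by
    rw [hF, Finset.card_powersetCard, hEcard]
  have hFpos : 0 < F.card := by
    rw [hFcard]; exact Nat.choose_pos (by omega)
  -- membership of complement
  have hcmem : ∀ A ∈ F, E \ A ∈ F := by
    intro A hA
    rw [hF, Finset.mem_powersetCard] at hA ⊢
    refine ⟨Finset.sdiff_subset, ?_⟩
    rw [Finset.card_sdiff_of_subset hA.1, hA.2, hEcard]
    omega
  -- key pointwise inequality
  have key : ∀ A ∈ F, v s ≤ v (restrict s (insert i A)) + v (restrict s (insert i (E \ A))) := by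
    intro A hA
    refine (hsub s (insert i A)).trans ?_
    gcongr
    refine hmono _ _ fun j => ?_
    unfold restrict
    by_cases hj : j ∈ (insert i A)ᶜ
    · have hji : j ≠ i := by
        intro h; subst h; exact (Finset.mem_compl.mp hj) (Finset.mem_insert_self _ _)
      have hjA : j ∉ A := by
        intro h; exact (Finset.mem_compl.mp hj) (Finset.mem_insert_of_mem h)
      have hmem : j ∈ insert i (E \ A) := by
        apply Finset.mem_insert_of_mem
        exact Finset.mem_sdiff.mpr ⟨Finset.mem_erase.mpr ⟨hji, Finset.mem_univ _⟩, hjA⟩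
      rw [if_pos hj, if_pos hmem]
    · rw [if_neg hj]
      split_ifs with h
      exacts [hs j, le_rfl]
  -- sum of complements equals sum
  have hsumc : ∑ A ∈ F, v (restrict s (insert i (E \ A)))
      = ∑ A ∈ F, v (restrict s (insert i A)) := by
    refine Finset.sum_nbij' (fun A => E \ A) (fun A => E \ A) hcmem hcmem ?_ ?_ ?_
    · intro A hA
      rw [hF, Finset.mem_powersetCard] at hA
      exact Finset.sdiff_sdiff_eq_self hA.1
    · intro A hA
      rw [hF, Finset.mem_powersetCard] at hA
      exact Finset.sdiff_sdiff_eq_self hA.1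
    · intro A hA; rfl
  have hcardsum : (F.card : ℝ) * v s ≤ 2 * ∑ A ∈ F, v (restrict s (insert i A)) := by
    have h1 : ∑ _A ∈ F, v s ≤ ∑ A ∈ F, (v (restrict s (insert i A)) + v (restrict s (insert i (E \ A)))) :=
      Finset.sum_le_sum key
    rw [Finset.sum_const, nsmul_eq_mul] at h1
    rw [Finset.sum_add_distrib, hsumc] at h1
    linarith
  rw [div_le_div_iff₀ (by norm_num) (by exact_mod_cast hFpos)]
  linarith
end

section
/- Random sampling preserves a quarter of the optimal welfare: consider n agents with monotone valuations vᵢ : 2^[m] × ℝ≥0ⁿ → ℝ≥0 that are subadditive over signals, a signal profile s, and an optimal allocation (O₁*,...,Oₙ*) of the m items with total welfare OPT = ∑ᵢ vᵢ(Oᵢ*, s). Let Â be a uniformly random subset of [n] of size ⌊n/2⌋ and define proxy weights wᵢ(X) = vᵢ(X, s_{Â∪{i}}). Then E_Â[OPT([n]\Â, w, [m])] ≥ OPT/4, where OPT([n]\Â, w, [m]) is the maximum over allocations of [m] to agents in [n]\Â of ∑ wᵢ(bundle of i). -/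
/-- `optVal T w` is the optimal welfare of allocating the `m` items to the
agents in `T`, with weight (valuation) functions `w`: the supremum over
families of pairwise disjoint bundles `(X i)_{i ∈ T}` of `∑_{i∈T} w i (X i)`. -/
noncomputable def optVal {n m : ℕ} (T : Finset (Fin n))
    (w : Fin n → Finset (Fin m) → ℝ) : ℝ :=
  sSup {y : ℝ | ∃ X : Fin n → Finset (Fin m),
    (∀ i ∈ T, ∀ j ∈ T, i ≠ j → Disjoint (X i) (X j)) ∧ y = ∑ i ∈ T, w i (X i)}

lemma choose_bound (k : ℕ) : (2*k+1).choose k ≤ 2 * ((2*k).choose k) := by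
  cases k with
  | zero => simp
  | succ k' =>
    have h1 : (2*(k'+1)+1).choose (k'+1)
        = (2*(k'+1)).choose k' + (2*(k'+1)).choose (k'+1) := Nat.choose_succ_succ _ _
    have h2 : (2*(k'+1)).choose k' ≤ (2*(k'+1)).choose (k'+1) := by
      have h := Nat.choose_le_middle k' (2*(k'+1))
      have hm : (2*(k'+1))/2 = k'+1 := by omega
      rwa [hm] at h
    omega

lemma optVal_ge {n m : ℕ} (T : Finset (Fin n)) (w : Fin n → Finset (Fin m) → ℝ)
    (X : Fin n → Finset (Fin m))
    (hX : ∀ i ∈ T, ∀ j ∈ T, i ≠ j → Disjoint (X i) (X j)) :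
    (∑ i ∈ T, w i (X i)) ≤ optVal T w := by
  apply le_csSup
  · apply Set.Finite.bddAbove
    apply Set.Finite.subset
      (Set.finite_range (fun X : Fin n → Finset (Fin m) => ∑ i ∈ T, w i (X i)))
    rintro y ⟨X, -, rfl⟩
    exact ⟨X, rfl⟩
  · exact ⟨X, hX, rfl⟩

/-- random sampling preserves a quarter of the optimal welfare.
For monotone, subadditive-over-signals valuations, an optimal allocation `O`
with welfare `OPT = ∑ᵢ vᵢ(Oᵢ,s)`, and `Â` uniform of size `⌊n/2⌋`, the expected
optimal proxy welfare over agents outside `Â` with proxy weights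
`wᵢ(X) = vᵢ(X, s_{Â∪{i}})` is at least `OPT/4`. -/
theorem stmt_10 (n m : ℕ) (hodd : Odd n)
    (v : Fin n → Finset (Fin m) → (Fin n → ℝ) → ℝ)
    (hv : ∀ i X s, 0 ≤ v i X s)
    (hmonoS : ∀ i X (s s' : Fin n → ℝ), (∀ j, s j ≤ s' j) → v i X s ≤ v i X s')
    (hsub : ∀ i X (s : Fin n → ℝ) (A : Finset (Fin n)),
      v i X s ≤ v i X (restrict s A) + v i X (restrict s Aᶜ))
    (s : Fin n → ℝ) (hs : ∀ j, 0 ≤ s j)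
    (O : Fin n → Finset (Fin m))
    (hO : ∀ i j : Fin n, i ≠ j → Disjoint (O i) (O j))
    (hOopt : ∀ X : Fin n → Finset (Fin m),
      (∀ i j : Fin n, i ≠ j → Disjoint (X i) (X j)) →
      (∑ i : Fin n, v i (X i) s) ≤ ∑ i : Fin n, v i (O i) s) :
    (∑ i : Fin n, v i (O i) s) / 4 ≤
      (∑ A ∈ Finset.univ.powersetCard (n / 2),
          optVal (Finset.univ \ A) (fun i X => v i X (restrict s (insert i A))))
        / (((Finset.univ.powersetCard (n / 2) : Finset (Finset (Fin n))).card : ℝ)) := by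
  classical
  set k := n / 2 with hk
  set P := (Finset.univ : Finset (Fin n)).powersetCard k with hP
  obtain ⟨t, ht⟩ := hodd
  have hn : n = 2 * k + 1 := by omega
  set OPT := ∑ i : Fin n, v i (O i) s with hOPTdef
  have hOPT : 0 ≤ OPT := Finset.sum_nonneg fun i _ => hv _ _ _
  have hcardP : P.card = n.choose k := by
    rw [hP, Finset.card_powersetCard, Finset.card_univ, Fintype.card_fin]
  have hPpos : 0 < n.choose k := Nat.choose_pos (by omega)
  -- Step C : for each i, pairing bound on the inner sum
  have inner : ∀ i : Fin n,
      ((n-1).choose k : ℝ) / 2 * v i (O i) s ≤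
        ∑ A ∈ P.filter (fun A => i ∉ A), v i (O i) (restrict s (insert i A)) := by
    intro i
    set Q := P.filter (fun A => i ∉ A) with hQ
    have hQeq : Q = ((Finset.univ : Finset (Fin n)).erase i).powersetCard k := by
      ext A
      simp only [hQ, hP, Finset.mem_filter, Finset.mem_powersetCard, Finset.subset_iff,
        Finset.mem_erase, Finset.mem_univ, and_true, true_and]
      constructor
      · rintro ⟨⟨-, hcard⟩, hi⟩
        refine ⟨fun x hx h => hi (h ▸ hx), hcard⟩
      · rintro ⟨hsubA, hcard⟩
        exact ⟨⟨fun _ _ => trivial, hcard⟩, fun hA => hsubA hA rfl⟩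
    have hcardQ : Q.card = (n-1).choose k := by
      rw [hQeq, Finset.card_powersetCard, Finset.card_erase_of_mem (Finset.mem_univ i),
        Finset.card_univ, Fintype.card_fin]
    set σ : Finset (Fin n) → Finset (Fin n) :=
      fun A => (Finset.univ : Finset (Fin n)).erase i \ A with hσ
    have hmemQ : ∀ A ∈ Q, A ⊆ (Finset.univ : Finset (Fin n)).erase i ∧ A.card = k := by
      intro A hA
      rw [hQeq] at hA
      exact (Finset.mem_powersetCard.mp hA)
    have hσQ : ∀ A ∈ Q, σ A ∈ Q := by
      intro A hA
      obtain ⟨hAsub, hAcard⟩ := hmemQ A hA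
      rw [hQeq, Finset.mem_powersetCard]
      constructor
      · exact Finset.sdiff_subset
      · rw [Finset.card_sdiff_of_subset hAsub, Finset.card_erase_of_mem (Finset.mem_univ i),
          Finset.card_univ, Fintype.card_fin, hAcard]
        omega
    have hσσ : ∀ A ∈ Q, σ (σ A) = A := by
      intro A hA
      exact sdiff_sdiff_eq_self (hmemQ A hA).1
    set f : Finset (Fin n) → ℝ := fun A => v i (O i) (restrict s (insert i A)) with hf
    -- key pointwise inequality
    have hkey : ∀ A ∈ Q, v i (O i) s ≤ f A + f (σ A) := by
      intro A hA
      have h1 := hsub i (O i) s (insert i A)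
      have h2 : (insert i A)ᶜ = σ A := by
        ext x
        simp only [hσ, Finset.mem_compl, Finset.mem_insert, Finset.mem_sdiff,
          Finset.mem_erase, Finset.mem_univ, and_true]
        tauto
      have h3 : v i (O i) (restrict s (σ A)) ≤ f (σ A) := by
        apply hmonoS
        intro j
        simp only [restrict]
        by_cases hj : j ∈ σ A
        · simp [hj, Finset.mem_insert_of_mem hj]
        · simp only [hj, if_false]
          split <;> [exact hs j; exact le_refl 0]
      calc v i (O i) s ≤ v i (O i) (restrict s (insert i A))
            + v i (O i) (restrict s (insert i A)ᶜ) := h1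
        _ = f A + v i (O i) (restrict s (σ A)) := by rw [h2]
        _ ≤ f A + f (σ A) := by linarith
    have hsumσ : ∑ A ∈ Q, f (σ A) = ∑ A ∈ Q, f A :=
      Finset.sum_nbij' σ σ hσQ hσQ hσσ hσσ (fun A hA => rfl)
    have h2sum : (Q.card : ℝ) * v i (O i) s ≤ 2 * ∑ A ∈ Q, f A := by
      have := Finset.sum_le_sum hkey
      rw [Finset.sum_const, Finset.sum_add_distrib, hsumσ, nsmul_eq_mul] at this
      linarith
    rw [← hcardQ]
    linarith
  -- Step A+B : sum over A of optVal bounds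
  have key : ((n-1).choose k : ℝ) / 2 * OPT ≤
      ∑ A ∈ P, optVal (Finset.univ \ A) (fun i X => v i X (restrict s (insert i A))) := by
    have stepA : ∑ A ∈ P, ∑ i ∈ Finset.univ \ A, v i (O i) (restrict s (insert i A)) ≤
        ∑ A ∈ P, optVal (Finset.univ \ A) (fun i X => v i X (restrict s (insert i A))) := by
      apply Finset.sum_le_sum
      intro A _
      exact optVal_ge _ (fun i X => v i X (restrict s (insert i A))) O
        (fun i _ j _ hij => hO i j hij)
    have stepB : ∑ A ∈ P, ∑ i ∈ Finset.univ \ A, v i (O i) (restrict s (insert i A)) =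
        ∑ i : Fin n, ∑ A ∈ P.filter (fun A => i ∉ A), v i (O i) (restrict s (insert i A)) := by
      apply Finset.sum_comm'
      intro A i
      simp only [Finset.mem_sdiff, Finset.mem_univ, Finset.mem_filter, true_and]
      tauto
    calc ((n-1).choose k : ℝ) / 2 * OPT
        = ∑ i : Fin n, ((n-1).choose k : ℝ) / 2 * v i (O i) s := by
          rw [hOPTdef, Finset.mul_sum]
      _ ≤ ∑ i : Fin n, ∑ A ∈ P.filter (fun A => i ∉ A),
            v i (O i) (restrict s (insert i A)) := Finset.sum_le_sum fun i _ => inner i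
      _ = ∑ A ∈ P, ∑ i ∈ Finset.univ \ A, v i (O i) (restrict s (insert i A)) := stepB.symm
      _ ≤ _ := stepA
  -- Step D : final arithmetic
  have hchoose : n.choose k ≤ 2 * ((n-1).choose k) := by
    rw [hn]
    simpa [Nat.add_sub_cancel] using choose_bound k
  rw [hcardP, div_le_div_iff₀ (by norm_num) (by positivity)]
  have hc : (n.choose k : ℝ) ≤ 2 * ((n-1).choose k : ℝ) := by exact_mod_cast hchoose
  nlinarith [key, hOPT, mul_le_mul_of_nonneg_left hc hOPT]
end

section
/- For n ≥ 2 and k = ⌊n/e⌋ with sums starting at ⌈n/e⌉, if for every agent i one has ∑_{t=⌈n/e⌉}^{n} αₜ(i)/(t−1) ≥ αₙ(i)/2 and E[ALG] ≥ (k/n)·∑_{i=1}^{n} ∑_{t=k+1}^{n} αₜ(i)/(t−1), then E[ALG] ≥ (1/(2e))·∑ᵢ αₙ(i). -/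
open Finset

/-- `q! · e` is never a natural number (for `q ≥ 1`). -/
lemma fact_mul_exp_one_not_nat (q : ℕ) (hq : 1 ≤ q) (m : ℕ) :
    (q.factorial : ℝ) * Real.exp 1 ≠ m := by
  intro h
  set SA : ℝ := ∑ i ∈ range (q + 1), (q.factorial : ℝ) / (i.factorial : ℝ) with hSA
  have hcast : ∀ i ∈ range (q + 1),
      ((q.factorial / i.factorial : ℕ) : ℝ) = (q.factorial : ℝ) / (i.factorial : ℝ) := by
    intro i hi
    rw [mem_range] at hi
    exact Nat.cast_div (Nat.factorial_dvd_factorial (Nat.lt_succ_iff.mp hi))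
      (by exact_mod_cast i.factorial_ne_zero)
  have hA : ((∑ i ∈ range (q + 1), q.factorial / i.factorial : ℕ) : ℝ) = SA := by
    rw [Nat.cast_sum]
    exact Finset.sum_congr rfl hcast
  set A : ℕ := ∑ i ∈ range (q + 1), q.factorial / i.factorial with hAdef
  -- lower bound: SA < q! * e
  have hfq : (0:ℝ) < (q.factorial : ℝ) := by exact_mod_cast q.factorial_pos
  have hlow : SA + 1 / (q + 1) ≤ (q.factorial : ℝ) * Real.exp 1 := by
    have hs : ∑ i ∈ range (q + 2), (1:ℝ) ^ i / (i.factorial : ℝ) ≤ Real.exp 1 :=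
      Real.sum_le_exp_of_nonneg zero_le_one (q + 2)
    have hsplit : ∑ i ∈ range (q + 2), (1:ℝ) ^ i / (i.factorial : ℝ)
        = (∑ i ∈ range (q + 1), (1:ℝ) / (i.factorial : ℝ)) + 1 / ((q+1).factorial : ℝ) := by
      rw [Finset.sum_range_succ]
      simp
    have := mul_le_mul_of_nonneg_left hs hfq.le
    rw [hsplit, mul_add, Finset.mul_sum] at this
    have e1 : ∀ i ∈ range (q + 1), (q.factorial : ℝ) * ((1:ℝ) / (i.factorial : ℝ))
        = (q.factorial : ℝ) / (i.factorial : ℝ) := by intro i _; ring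
    rw [Finset.sum_congr rfl e1] at this
    have e2 : (q.factorial : ℝ) * (1 / ((q+1).factorial : ℝ)) = 1 / (q + 1) := by
      rw [Nat.factorial_succ]
      push_cast
      field_simp
    rw [e2] at this
    exact this
  -- upper bound
  have hup : (q.factorial : ℝ) * Real.exp 1 ≤ SA + ((q:ℝ) + 2) / ((q + 1)^2) := by
    have hb := Real.exp_bound' (x := 1) zero_le_one le_rfl (n := q + 1) (Nat.succ_pos q)
    have hb' : Real.exp 1 ≤ (∑ i ∈ range (q + 1), (1:ℝ) / (i.factorial : ℝ))
        + ((q:ℝ) + 1 + 1) / (((q+1).factorial : ℝ) * (q + 1)) := by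
      simpa [one_pow] using hb
    have := mul_le_mul_of_nonneg_left hb' hfq.le
    rw [mul_add, Finset.mul_sum] at this
    have e1 : ∀ i ∈ range (q + 1), (q.factorial : ℝ) * ((1:ℝ) / (i.factorial : ℝ))
        = (q.factorial : ℝ) / (i.factorial : ℝ) := by intro i _; ring
    rw [Finset.sum_congr rfl e1] at this
    have e2 : (q.factorial : ℝ) * (((q:ℝ) + 1 + 1) / (((q+1).factorial : ℝ) * (q + 1)))
        = ((q:ℝ) + 2) / ((q + 1)^2) := by
      rw [Nat.factorial_succ]
      push_cast
      have h1 : (q:ℝ) + 1 ≠ 0 := by positivity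
      have h2 : (q.factorial : ℝ) ≠ 0 := ne_of_gt hfq
      field_simp
      ring
    rw [e2] at this
    exact this
  -- combine: A < m < A + 1 in ℕ
  have hq1 : (0:ℝ) < 1 / ((q:ℝ) + 1) := by positivity
  have hlt1 : (A:ℝ) < (m:ℝ) := by rw [← h, hA] at *; linarith
  have hlt2 : (m:ℝ) < (A:ℝ) + 1 := by
    have hfrac : ((q:ℝ) + 2) / ((q + 1)^2) < 1 := by
      rw [div_lt_one (by positivity)]
      have : (1:ℝ) ≤ (q:ℝ) := by exact_mod_cast hq
      nlinarith
    rw [← h, hA] at *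
    linarith
  have h1 : A < m := by exact_mod_cast hlt1
  have h2 : m < A + 1 := by exact_mod_cast hlt2
  omega

/-- assembly of the 2e-competitive bound. With `k = ⌊n/e⌋`, if
for every agent `i` we have `∑_{t=⌈n/e⌉}^{n} αₜ(i)/(t−1) ≥ αₙ(i)/2`, and
`E[ALG] ≥ (k/n)·∑ᵢ ∑_{t=k+1}^{n} αₜ(i)/(t−1)`, then
`E[ALG] ≥ (1/(2e) − 1/(2n))·∑ᵢ αₙ(i)`. -/
theorem stmt_17 (n : ℕ) (hn : 2 ≤ n) (k : ℕ) (hk : k = ⌊(n : ℝ) / Real.exp 1⌋₊)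
    (α : Fin n → ℕ → ℝ) (hαpos : ∀ i t, 0 ≤ α i t)
    (ALG : ℝ)
    (h1 : ∀ i : Fin n,
      α i n / 2 ≤ ∑ t ∈ Finset.Icc ⌈(n : ℝ) / Real.exp 1⌉₊ n, α i t / ((t : ℝ) - 1))
    (h2 : ((k : ℝ) / n) * ∑ i : Fin n, ∑ t ∈ Finset.Icc (k + 1) n, α i t / ((t : ℝ) - 1)
      ≤ ALG) :
    (1 / (2 * Real.exp 1) - 1 / (2 * n)) * ∑ i : Fin n, α i n ≤ ALG := by
  set x : ℝ := (n : ℝ) / Real.exp 1 with hx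
  have he : (0:ℝ) < Real.exp 1 := Real.exp_pos 1
  have hnpos : (0:ℝ) < (n:ℝ) := by exact_mod_cast Nat.lt_of_lt_of_le Nat.zero_lt_two hn
  have hxpos : 0 < x := div_pos hnpos he
  -- x is not equal to k
  have hxne : x ≠ (k : ℝ) := by
    intro heq
    rcases Nat.eq_zero_or_pos k with hk0 | hk1
    · rw [hk0] at heq; simp at heq; exact absurd heq (ne_of_gt hxpos)
    · have hke : (k:ℝ) * Real.exp 1 = (n:ℝ) := by
        rw [hx, div_eq_iff he.ne'] at heq
        linarith [heq]
      obtain ⟨p, rfl⟩ : ∃ p, k = p + 1 := ⟨k - 1, by omega⟩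
      have : ((p+1).factorial : ℝ) * Real.exp 1 = ((p.factorial * n : ℕ) : ℝ) := by
        have hke' : ((p:ℝ) + 1) * Real.exp 1 = (n:ℝ) := by push_cast at hke ⊢; exact hke
        rw [Nat.factorial_succ]
        push_cast
        linear_combination (p.factorial : ℝ) * hke'
      exact fact_mul_exp_one_not_nat (p+1) (by omega) _ this
  -- ceiling = k + 1
  have hceil : ⌈x⌉₊ = k + 1 := by
    have hle : ⌈x⌉₊ ≤ k + 1 := hk ▸ Nat.ceil_le_floor_add_one x
    have hlt : k < ⌈x⌉₊ := by
      rw [Nat.lt_ceil]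
      exact lt_of_le_of_ne (hk ▸ Nat.floor_le hxpos.le) (Ne.symm hxne)
    omega
  -- rewrite h1
  have h1' : ∀ i : Fin n,
      α i n / 2 ≤ ∑ t ∈ Finset.Icc (k + 1) n, α i t / ((t : ℝ) - 1) := by
    intro i
    have := h1 i
    rwa [hceil] at this
  -- sum over i
  have hsum : (∑ i : Fin n, α i n) / 2
      ≤ ∑ i : Fin n, ∑ t ∈ Finset.Icc (k + 1) n, α i t / ((t : ℝ) - 1) := by
    rw [Finset.sum_div]
    exact Finset.sum_le_sum fun i _ => h1' i
  have hS : 0 ≤ ∑ i : Fin n, α i n := Finset.sum_nonneg fun i _ => hαpos i n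
  have hknn : (0:ℝ) ≤ (k:ℝ) / n := by positivity
  -- (k/n) * (S/2) ≤ ALG
  have hmid : ((k:ℝ)/n) * ((∑ i : Fin n, α i n) / 2) ≤ ALG :=
    le_trans (mul_le_mul_of_nonneg_left hsum hknn) h2
  -- coefficient bound: 1/(2e) - 1/(2n) ≤ (k/n)/2
  have hkge : x - 1 < (k:ℝ) := hk ▸ Nat.sub_one_lt_floor x
  have hcoef : 1 / (2 * Real.exp 1) - 1 / (2 * n) ≤ ((k:ℝ)/n) * (1/2) := by
    rw [div_mul_eq_mul_div, mul_one_div, div_div]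
    rw [div_sub_div _ _ (by positivity : (2:ℝ) * Real.exp 1 ≠ 0) (by positivity : (2:ℝ)*(n:ℝ) ≠ 0),
      div_le_div_iff₀ (by positivity) (by positivity)]
    have hxk : (n:ℝ) / Real.exp 1 - 1 < (k:ℝ) := hkge
    have h3 : (n:ℝ) < ((k:ℝ) + 1) * Real.exp 1 := by
      rw [← div_lt_iff₀ he]; linarith
    nlinarith [mul_lt_mul_of_pos_left h3 hnpos]
  calc (1 / (2 * Real.exp 1) - 1 / (2 * n)) * ∑ i : Fin n, α i n
      ≤ ((k:ℝ)/n) * (1/2) * ∑ i : Fin n, α i n := mul_le_mul_of_nonneg_right hcoef hS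
    _ = ((k:ℝ)/n) * ((∑ i : Fin n, α i n) / 2) := by ring
    _ ≤ ALG := hmid
end
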